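/- Suppose N ≥ 2 and all weights equal 1, and assume the fixed-point attempt probabilities τ̂(q) and τ(j;p_0) lie in (0,1) for all reset distributions q and all parameters (j, p_0). Then the supremum of the throughput over all exponential-backoff reset distributions equals the maximum over the RandomReset family and is attained: sup_q S(τ̂(q), 1) = max_{j ∈ {0,…,m−1}, p_0 ∈ [0,1]} S(τ(j;p_0), 1). In particular, an optimal exponential-backoff policy can be realized as a RandomReset(j;p_0) policy. -/

import Mathlib

open Finset

/-- `α_j(c) = (1-c) ∑_{i=j}^m 2^i c^{i-j} + 2^m c^{m-j}`. -/
noncomputable def alphaB (m j : ℕ) (c : ℝ) : ℝ :=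
  (1 - c) * ∑ i ∈ Finset.Icc j m, (2 : ℝ) ^ i * c ^ (i - j) + (2 : ℝ) ^ m * c ^ (m - j)

/-- `κ_0 = 2 / CW_min`. -/
noncomputable def kappa0 (CWmin : ℕ) : ℝ := 2 / (CWmin : ℝ)

/-- A reset distribution `q = (q_0, …, q_m)`. -/
def IsResetDist (m : ℕ) (q : Fin (m + 1) → ℝ) : Prop :=
  (∀ j, 0 ≤ q j) ∧ (∑ j, q j) = 1

/-- Conditional attempt probability `τ̂_c(q) = κ_0 / ∑_j q_j α_j(c)`. -/
noncomputable def tauHatC (m CWmin : ℕ) (q : Fin (m + 1) → ℝ) (c : ℝ) : ℝ :=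
  kappa0 CWmin / ∑ j : Fin (m + 1), q j * alphaB m (j : ℕ) c

/-- RandomReset(j; p₀) conditional attempt probability
`τ_c(j;p₀) = κ_0 / (p₀ α_j(c) + ((1-p₀)/(m-j)) ∑_{i=j+1}^m α_i(c))`. -/
noncomputable def tauRRC (m CWmin : ℕ) (j : ℕ) (p0 c : ℝ) : ℝ :=
  kappa0 CWmin /
    (p0 * alphaB m j c + ((1 - p0) / ((m : ℝ) - (j : ℝ))) * ∑ i ∈ Finset.Icc (j + 1) m, alphaB m i c)

/-- `τ ∈ [0,1]` is the fixed-point attempt probability `τ̂(q)` of the reset distribution `q`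
for `N` nodes: `τ = τ̂_{1-(1-τ)^(N-1)}(q)`. -/
def IsFixedPointQ (m CWmin N : ℕ) (q : Fin (m + 1) → ℝ) (τ : ℝ) : Prop :=
  τ ∈ Set.Icc (0 : ℝ) 1 ∧ τ = tauHatC m CWmin q (1 - (1 - τ) ^ (N - 1))

/-- `τ ∈ [0,1]` is the fixed-point attempt probability `τ(j;p₀)` of the RandomReset(j;p₀)
policy for `N` nodes: `τ = τ_{1-(1-τ)^(N-1)}(j;p₀)`. -/
def IsFixedPointRR (m CWmin N : ℕ) (j : ℕ) (p0 τ : ℝ) : Prop :=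
  τ ∈ Set.Icc (0 : ℝ) 1 ∧ τ = tauRRC m CWmin j p0 (1 - (1 - τ) ^ (N - 1))

/-- System throughput with unit weights: `S(p, 1)` with `P_I = (1-p)^N`, `P_T = N p/(1-p)`. -/
noncomputable def Ssys1 (N : ℕ) (EP σ Ts Tc p : ℝ) : ℝ :=
  EP * ((N : ℝ) * p / (1 - p)) * (1 - p) ^ N /
    ((1 - p) ^ N * σ + ((N : ℝ) * p / (1 - p)) * (1 - p) ^ N * (Ts - Tc)
      + (1 - (1 - p) ^ N) * Tc)

lemma alphaB_top (m : ℕ) (c : ℝ) : alphaB m m c = 2 ^ m * (2 - c) := by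
  simp [alphaB]; ring

lemma alphaB_rec (m j : ℕ) (hj : j < m) (c : ℝ) :
    alphaB m j c = (1 - c) * 2 ^ j + c * alphaB m (j + 1) c := by
  unfold alphaB
  have h1 : Finset.Icc j m = insert j (Finset.Icc (j+1) m) := by
    exact (Finset.insert_Icc_add_one_left_eq_Icc hj.le).symm
  have h2 : ∑ i ∈ Finset.Icc j m, (2:ℝ) ^ i * c ^ (i - j)
      = 2 ^ j + c * ∑ i ∈ Finset.Icc (j+1) m, (2:ℝ) ^ i * c ^ (i - (j+1)) := by
    rw [h1, Finset.sum_insert (by simp)]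
    rw [Finset.mul_sum]
    simp only [Nat.sub_self, pow_zero, mul_one]
    congr 1
    apply Finset.sum_congr rfl
    intro i hi
    have hij : j + 1 ≤ i := (Finset.mem_Icc.mp hi).1
    have : i - j = (i - (j+1)) + 1 := by omega
    rw [this, pow_succ]
    ring
  rw [h2]
  have h3 : m - j = (m - (j+1)) + 1 := by omega
  rw [h3, pow_succ]
  ring

lemma alphaB_ge (m : ℕ) (c : ℝ) (hc0 : 0 ≤ c) (hc1 : c ≤ 1) :
    ∀ d j, j + d = m → (2:ℝ) ^ j ≤ alphaB m j c := by
  intro d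
  induction d with
  | zero => intro j hj; subst hj; rw [Nat.add_zero, alphaB_top]; nlinarith [pow_pos (by norm_num : (0:ℝ) < 2) j]
  | succ d ih =>
    intro j hj
    have hjm : j < m := by omega
    rw [alphaB_rec m j hjm c]
    have h := ih (j+1) (by omega)
    have h2 : (2:ℝ)^(j+1) = 2 * 2^j := by rw [pow_succ]; ring
    nlinarith [pow_pos (by norm_num : (0:ℝ) < 2) j]

lemma alphaB_step_mono (m j : ℕ) (hj : j < m) (c : ℝ) (hc0 : 0 ≤ c) (hc1 : c ≤ 1) :
    alphaB m j c ≤ alphaB m (j+1) c := by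
  rw [alphaB_rec m j hj c]
  have h := alphaB_ge m c hc0 hc1 (m - (j+1)) (j+1) (by omega)
  have h2 : (2:ℝ)^(j+1) = 2 * 2^j := by rw [pow_succ]; ring
  nlinarith [pow_pos (by norm_num : (0:ℝ) < 2) j]

lemma alphaB_mono (m : ℕ) (c : ℝ) (hc0 : 0 ≤ c) (hc1 : c ≤ 1) :
    ∀ i j, i ≤ j → j ≤ m → alphaB m i c ≤ alphaB m j c := by
  intro i j hij hjm
  induction j with
  | zero =>
    have : i = 0 := by omega
    subst this; exact le_refl _
  | succ j ih =>
    rcases Nat.lt_or_ge i (j+1) with h | h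
    · exact le_trans (ih (by omega) (by omega)) (alphaB_step_mono m j (by omega) c hc0 hc1)
    · have : i = j + 1 := by omega
      subst this; exact le_refl _

lemma alphaB_cont (m j : ℕ) : Continuous (alphaB m j) := by
  unfold alphaB
  fun_prop

noncomputable def ccf (N : ℕ) (τ : ℝ) : ℝ := 1 - (1 - τ) ^ (N - 1)

lemma ccf_hasDeriv (N : ℕ) (hN : 2 ≤ N) (τ : ℝ) :
    HasDerivAt (ccf N) ((N - 1 : ℕ) * (1 - τ) ^ (N - 2)) τ := by
  have h1 : HasDerivAt (fun τ : ℝ => 1 - τ) (-1) τ := (hasDerivAt_id τ).const_sub 1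
  have h2 := h1.pow (N - 1)
  have h3 : (N - 1) - 1 = N - 2 := by omega
  have h2' : HasDerivAt (fun τ : ℝ => (1 - τ) ^ (N - 1))
      (-((N - 1 : ℕ) * (1 - τ) ^ (N - 2))) τ := by
    exact h2.congr_deriv (by rw [h3]; ring)
  have := h2'.const_sub 1
  exact this.congr_deriv (by ring)

lemma ccf_mem (N : ℕ) (hN : 2 ≤ N) {τ : ℝ} (h0 : 0 ≤ τ) (h1 : τ ≤ 1) :
    ccf N τ ∈ Set.Icc (0:ℝ) 1 := by
  unfold ccf
  constructor
  · have : (1 - τ) ^ (N - 1) ≤ 1 := pow_le_one₀ (by linarith) (by linarith)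
    linarith
  · have : 0 ≤ (1 - τ) ^ (N - 1) := pow_nonneg (by linarith) _
    linarith

lemma ccf_cont (N : ℕ) : Continuous (ccf N) := by unfold ccf; fun_prop

-- Bernoulli-based base positivity: for τ ∈ (0,1), k := N-2,
-- 1 + (1-τ)^(k+1) - (k+1)*τ*(1-τ)^k > 0
lemma base_pos (k : ℕ) {τ : ℝ} (h0 : 0 < τ) (h1 : τ < 1) :
    0 < 1 + (1 - τ) ^ (k + 1) - (k + 1 : ℝ) * τ * (1 - τ) ^ k := by
  have hv : 0 < 1 - τ := by linarith
  have hb : 1 + (k:ℝ) * τ ≤ (1 + τ) ^ k := one_add_mul_le_pow (by linarith) k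
  have hprod : (1 - τ) ^ k * (1 + τ) ^ k ≤ 1 := by
    rw [← mul_pow]
    apply pow_le_one₀ (by nlinarith) (by nlinarith)
  have hvk : 0 < (1 - τ) ^ k := pow_pos hv k
  have key : (1 - τ) ^ k * (1 + (k:ℝ) * τ) ≤ 1 := by
    calc (1 - τ) ^ k * (1 + (k:ℝ) * τ) ≤ (1 - τ) ^ k * (1 + τ) ^ k :=
          mul_le_mul_of_nonneg_left hb hvk.le
      _ ≤ 1 := hprod
  have hp : (1 - τ) ^ (k + 1) = (1 - τ) ^ k * (1 - τ) := by rw [pow_succ]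
  rw [hp]
  push_cast
  nlinarith [mul_pos hvk (by linarith : (0:ℝ) < 2 - 2 * τ)]

noncomputable def phiF (m N j : ℕ) (τ : ℝ) : ℝ := τ * alphaB m j (ccf N τ)

lemma u_hasDeriv (N : ℕ) (τ : ℝ) :
    HasDerivAt (fun τ : ℝ => (1 - τ) ^ (N - 1))
      (-((N - 1 : ℕ) * (1 - τ) ^ (N - 2))) τ := by
  have h1 : HasDerivAt (fun τ : ℝ => 1 - τ) (-1) τ := (hasDerivAt_id τ).const_sub 1
  have h2 := h1.pow (N - 1)
  have h3 : (N - 1) - 1 = N - 2 := by omega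
  exact h2.congr_deriv (by rw [h3]; ring)

lemma phiF_cont (m N j : ℕ) : Continuous (phiF m N j) :=
  continuous_id.mul ((alphaB_cont m j).comp (ccf_cont N))

lemma phiF_ge (m N j : ℕ) (hN : 2 ≤ N) (hj : j ≤ m) {τ : ℝ} (h0 : 0 ≤ τ) (h1 : τ ≤ 1) :
    2 ^ j * τ ≤ phiF m N j τ := by
  have hc := ccf_mem N hN h0 h1
  have := alphaB_ge m (ccf N τ) hc.1 hc.2 (m - j) j (by omega)
  unfold phiF
  nlinarith [pow_pos (by norm_num : (0:ℝ) < 2) j]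

lemma phiF_deriv (m N : ℕ) (hN : 2 ≤ N) :
    ∀ d j, j + d = m → ∀ τ ∈ Set.Ioo (0:ℝ) 1,
      ∃ dv, 0 < dv ∧ HasDerivAt (phiF m N j) dv τ := by
  obtain ⟨k, rfl⟩ : ∃ k, N = k + 2 := ⟨N - 2, by omega⟩
  have e1 : (k + 2) - 1 = k + 1 := by omega
  have e2 : (k + 2) - 2 = k := by omega
  intro d
  induction d with
  | zero =>
    intro j hj τ hτ
    obtain ⟨h0, h1⟩ := hτ
    have hjm : j = m := by omega
    subst hjm
    have hc := ccf_hasDeriv (k+2) (by omega) τ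
    have hg : HasDerivAt (fun τ : ℝ => (2:ℝ)^j * (2 - ccf (k+2) τ))
        ((2:ℝ)^j * (-(((k+2) - 1 : ℕ) * (1 - τ) ^ ((k+2) - 2)))) τ :=
      (hc.const_sub 2).const_mul _
    have hD := (hasDerivAt_id τ).mul hg
    have hfun : phiF j (k+2) j = fun τ => τ * ((2:ℝ)^j * (2 - ccf (k+2) τ)) := by
      funext x; rw [phiF, alphaB_top]
    rw [hfun]
    refine ⟨_, ?_, hD⟩
    simp only [e1, e2, id_eq]
    have hb := base_pos k h0 h1
    have h2j : (0:ℝ) < 2 ^ j := pow_pos (by norm_num) j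
    have : ccf (k+2) τ = 1 - (1-τ)^(k+1) := by rw [ccf, e1]
    rw [this]
    push_cast
    nlinarith
  | succ d ih =>
    intro j hj τ hτ
    obtain ⟨h0, h1⟩ := hτ
    have hjm : j < m := by omega
    obtain ⟨dv, hdv, hD⟩ := ih (j+1) (by omega) τ ⟨h0, h1⟩
    have hu := u_hasDeriv (k+2) τ
    have ha : HasDerivAt (fun τ : ℝ => (2:ℝ)^j * (τ * (1-τ)^((k+2)-1)))
        ((2:ℝ)^j * (1 * (1-τ)^((k+2)-1) + τ * (-(((k+2) - 1 : ℕ) * (1 - τ) ^ ((k+2) - 2))))) τ :=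
      ((hasDerivAt_id τ).mul hu).const_mul _
    have hb : HasDerivAt (fun τ : ℝ => ccf (k+2) τ * phiF m (k+2) (j+1) τ)
        ((((k+2) - 1 : ℕ) * (1 - τ) ^ ((k+2) - 2)) * phiF m (k+2) (j+1) τ
          + ccf (k+2) τ * dv) τ :=
      (ccf_hasDeriv (k+2) (by omega) τ).mul hD
    have hfun : phiF m (k+2) j = fun τ =>
        (2:ℝ)^j * (τ * (1-τ)^((k+2)-1)) + ccf (k+2) τ * phiF m (k+2) (j+1) τ := by
      funext x
      rw [phiF, alphaB_rec m j hjm, phiF]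
      have : (1 : ℝ) - ccf (k+2) x = (1-x)^((k+2)-1) := by rw [ccf]; ring
      rw [← this]; ring
    rw [hfun]
    refine ⟨_, ?_, ha.add hb⟩
    -- positivity
    have hφ := phiF_ge m (k+2) (j+1) (by omega) (by omega) h0.le h1.le
    have hcc := ccf_mem (k+2) (by omega) h0.le h1.le
    have hcp : (0:ℝ) ≤ (((k+2) - 1 : ℕ) : ℝ) * (1 - τ) ^ ((k+2) - 2) := by
      apply mul_nonneg (by positivity) (pow_nonneg (by linarith) _)
    have h2j : (0:ℝ) < 2 ^ j := pow_pos (by norm_num) j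
    have hu0 : (0:ℝ) < (1-τ)^((k+2)-1) := pow_pos (by linarith) _
    have h2j1 : (2:ℝ)^(j+1) = 2 * 2^j := by rw [pow_succ]; ring
    have hφ' : 2 * 2^j * τ ≤ phiF m (k+2) (j+1) τ := by rw [h2j1] at hφ; linarith
    have hmul : (((k+2) - 1 : ℕ) : ℝ) * (1 - τ) ^ ((k+2) - 2) * (2 * 2^j * τ)
        ≤ (((k+2) - 1 : ℕ) : ℝ) * (1 - τ) ^ ((k+2) - 2) * phiF m (k+2) (j+1) τ :=
      mul_le_mul_of_nonneg_left hφ' hcp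
    nlinarith [mul_nonneg hcc.1 hdv.le, mul_pos h2j hu0,
      mul_nonneg (mul_nonneg h2j.le h0.le) hcp]

lemma phiF_strictMono (m N j : ℕ) (hN : 2 ≤ N) (hj : j ≤ m) :
    StrictMonoOn (phiF m N j) (Set.Icc 0 1) := by
  apply strictMonoOn_of_deriv_pos (convex_Icc 0 1) (phiF_cont m N j).continuousOn
  intro x hx
  rw [interior_Icc] at hx
  obtain ⟨dv, hdv, hD⟩ := phiF_deriv m N hN (m - j) j (by omega) x hx
  rw [hD.deriv]; exact hdv

noncomputable def gW (m N : ℕ) (w : Fin (m+1) → ℝ) (τ : ℝ) : ℝ :=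
  τ * ∑ j : Fin (m+1), w j * alphaB m (j:ℕ) (ccf N τ)

lemma gW_eq_sum (m N : ℕ) (w : Fin (m+1) → ℝ) (τ : ℝ) :
    gW m N w τ = ∑ j : Fin (m+1), w j * phiF m N (j:ℕ) τ := by
  unfold gW phiF
  rw [Finset.mul_sum]
  exact Finset.sum_congr rfl (fun j _ => by ring)

lemma exists_pos_weight {m : ℕ} {w : Fin (m+1) → ℝ} (hw : IsResetDist m w) :
    ∃ j, 0 < w j := by
  by_contra hc
  push_neg at hc
  have : (∑ j, w j) ≤ 0 := Finset.sum_nonpos (fun j _ => hc j)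
  rw [hw.2] at this; linarith

lemma gW_strictMono (m N : ℕ) (hN : 2 ≤ N) {w : Fin (m+1) → ℝ} (hw : IsResetDist m w) :
    StrictMonoOn (gW m N w) (Set.Icc 0 1) := by
  intro x hx y hy hxy
  rw [gW_eq_sum, gW_eq_sum]
  obtain ⟨j0, hj0⟩ := exists_pos_weight hw
  apply Finset.sum_lt_sum
  · intro i _
    exact mul_le_mul_of_nonneg_left
      (((phiF_strictMono m N i hN (by have := i.isLt; omega)).monotoneOn) hx hy hxy.le) (hw.1 i)
  · exact ⟨j0, Finset.mem_univ _,
      mul_lt_mul_of_pos_left ((phiF_strictMono m N j0 hN (by have := j0.isLt; omega)) hx hy hxy) hj0⟩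

lemma D_ge_one (m : ℕ) {w : Fin (m+1) → ℝ} (hw : IsResetDist m w) {c : ℝ}
    (hc0 : 0 ≤ c) (hc1 : c ≤ 1) : 1 ≤ ∑ j : Fin (m+1), w j * alphaB m (j:ℕ) c := by
  calc (1:ℝ) = ∑ j, w j := hw.2.symm
    _ ≤ ∑ j : Fin (m+1), w j * alphaB m (j:ℕ) c := by
        apply Finset.sum_le_sum
        intro i _
        have h1 : (1:ℝ) ≤ 2 ^ (i:ℕ) := one_le_pow₀ (by norm_num)
        have h2 := alphaB_ge m c hc0 hc1 (m - (i:ℕ)) i (by have := i.isLt; omega)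
        have h3 := mul_le_mul_of_nonneg_left (h1.trans h2) (hw.1 i)
        linarith

lemma fixed_gW (m N CWmin : ℕ) (hN : 2 ≤ N) {w : Fin (m+1) → ℝ} (hw : IsResetDist m w)
    {τ : ℝ} (hτ : τ ∈ Set.Icc (0:ℝ) 1)
    (heq : τ = tauHatC m CWmin w (1 - (1-τ)^(N-1))) : gW m N w τ = kappa0 CWmin := by
  have hcc := ccf_mem N hN hτ.1 hτ.2
  have hD := D_ge_one m hw hcc.1 hcc.2
  have hD0 : (∑ j : Fin (m+1), w j * alphaB m (j:ℕ) (ccf N τ)) ≠ 0 := by linarith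
  unfold gW
  have hcd : (1:ℝ) - (1-τ)^(N-1) = ccf N τ := rfl
  rw [tauHatC, hcd, eq_div_iff hD0] at heq
  exact heq

lemma phi_bounds (m N : ℕ) (hN : 2 ≤ N) {w : Fin (m+1) → ℝ} (hw : IsResetDist m w)
    {τ : ℝ} (hτ : τ ∈ Set.Icc (0:ℝ) 1) :
    phiF m N 0 τ ≤ gW m N w τ ∧ gW m N w τ ≤ phiF m N m τ := by
  have hcc := ccf_mem N hN hτ.1 hτ.2
  rw [gW_eq_sum]
  constructor
  · calc phiF m N 0 τ = ∑ j : Fin (m+1), w j * phiF m N 0 τ := by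
          rw [← Finset.sum_mul, hw.2, one_mul]
      _ ≤ ∑ j : Fin (m+1), w j * phiF m N (j:ℕ) τ := by
          apply Finset.sum_le_sum
          intro i _
          apply mul_le_mul_of_nonneg_left _ (hw.1 i)
          unfold phiF
          exact mul_le_mul_of_nonneg_left
            (alphaB_mono m _ hcc.1 hcc.2 0 i (by omega) (by have := i.isLt; omega)) hτ.1
  · calc (∑ j : Fin (m+1), w j * phiF m N (j:ℕ) τ)
        ≤ ∑ j : Fin (m+1), w j * phiF m N m τ := by
          apply Finset.sum_le_sum
          intro i _
          apply mul_le_mul_of_nonneg_left _ (hw.1 i)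
          unfold phiF
          exact mul_le_mul_of_nonneg_left
            (alphaB_mono m _ hcc.1 hcc.2 i m (by have := i.isLt; omega) (by omega)) hτ.1
      _ = phiF m N m τ := by rw [← Finset.sum_mul, hw.2, one_mul]

noncomputable def qRR (m j : ℕ) (p0 : ℝ) : Fin (m+1) → ℝ := fun i =>
  if (i:ℕ) = j then p0 else if j < (i:ℕ) then (1 - p0) / ((m:ℝ) - (j:ℝ)) else 0

lemma qRR_sum_mul (m j : ℕ) (hj : j < m) (p0 : ℝ) (f : ℕ → ℝ) :
    ∑ i : Fin (m+1), qRR m j p0 i * f (i:ℕ)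
      = p0 * f j + ((1 - p0) / ((m:ℝ) - (j:ℝ))) * ∑ i ∈ Finset.Icc (j+1) m, f i := by
  set w : ℝ := (1 - p0) / ((m:ℝ) - (j:ℝ)) with hw
  have h0 : ∑ i : Fin (m+1), qRR m j p0 i * f (i:ℕ)
      = ∑ i ∈ Finset.range (m+1), (if i = j then p0 else if j < i then w else 0) * f i := by
    rw [← Fin.sum_univ_eq_sum_range (fun i => (if i = j then p0 else if j < i then w else 0) * f i) (m+1)]
    rfl
  rw [h0, Finset.range_eq_Ico,
    ← Finset.sum_Ico_consecutive _ (Nat.zero_le (j+1)) (by omega : j+1 ≤ m+1)]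
  have h1 : ∑ i ∈ Finset.Ico 0 (j+1), (if i = j then p0 else if j < i then w else 0) * f i
      = p0 * f j := by
    rw [← Finset.range_eq_Ico, Finset.sum_range_succ]
    have : ∑ i ∈ Finset.range j, (if i = j then p0 else if j < i then w else 0) * f i = 0 := by
      apply Finset.sum_eq_zero
      intro i hi
      have := Finset.mem_range.mp hi
      rw [if_neg (by omega), if_neg (by omega), zero_mul]
    rw [this, zero_add, if_pos rfl]
  have h2 : ∑ i ∈ Finset.Ico (j+1) (m+1), (if i = j then p0 else if j < i then w else 0) * f i
      = w * ∑ i ∈ Finset.Icc (j+1) m, f i := by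
    rw [Finset.Ico_add_one_right_eq_Icc, Finset.mul_sum]
    apply Finset.sum_congr rfl
    intro i hi
    have := Finset.mem_Icc.mp hi
    rw [if_neg (by omega), if_pos (by omega)]
  rw [h1, h2]

lemma qRR_isDist (m j : ℕ) (hj : j < m) {p0 : ℝ} (hp : p0 ∈ Set.Icc (0:ℝ) 1) :
    IsResetDist m (qRR m j p0) := by
  have hmj : (0:ℝ) < (m:ℝ) - (j:ℝ) := by
    have : (j:ℝ) < (m:ℝ) := by exact_mod_cast hj
    linarith
  constructor
  · intro i
    unfold qRR
    split
    · exact hp.1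
    · split
      · exact div_nonneg (by linarith [hp.2]) hmj.le
      · exact le_refl 0
  · have h := qRR_sum_mul m j hj p0 (fun _ => 1)
    have h2 : (∑ i : Fin (m+1), qRR m j p0 i)
        = ∑ i : Fin (m+1), qRR m j p0 i * (fun _ : ℕ => (1:ℝ)) (i:ℕ) := by simp
    rw [h2, h, Finset.sum_const, Nat.card_Icc]
    have hc : ((m + 1 - (j+1) : ℕ) : ℝ) = (m:ℝ) - (j:ℝ) := by
      have : m + 1 - (j+1) = m - j := by omega
      rw [this, Nat.cast_sub hj.le]
    rw [nsmul_eq_mul, hc]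
    field_simp
    ring

lemma tauRRC_eq_tauHatC (m CWmin j : ℕ) (hj : j < m) (p0 c : ℝ) :
    tauRRC m CWmin j p0 c = tauHatC m CWmin (qRR m j p0) c := by
  unfold tauRRC tauHatC
  rw [qRR_sum_mul m j hj p0 (fun i => alphaB m i c)]

lemma Sden_pos (N : ℕ) {σ Ts Tc p : ℝ} (hσ : 0 < σ) (hTc : σ ≤ Tc) (hTs : Tc ≤ Ts)
    (hp : p ∈ Set.Ioo (0:ℝ) 1) :
    0 < (1 - p) ^ N * σ + ((N : ℝ) * p / (1 - p)) * (1 - p) ^ N * (Ts - Tc)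
      + (1 - (1 - p) ^ N) * Tc := by
  have h1 : 0 < 1 - p := by linarith [hp.2]
  have h2 : 0 < (1-p)^N := pow_pos h1 N
  have h3 : (1-p)^N ≤ 1 := pow_le_one₀ (by linarith) (by linarith [hp.1])
  have h4 : 0 ≤ (N:ℝ) * p / (1-p) :=
    div_nonneg (mul_nonneg (Nat.cast_nonneg N) hp.1.le) h1.le
  have h5 := mul_pos h2 hσ
  have h6 := mul_nonneg (mul_nonneg h4 h2.le) (by linarith : (0:ℝ) ≤ Ts - Tc)
  have h7 := mul_nonneg (by linarith : (0:ℝ) ≤ 1 - (1-p)^N) (by linarith : (0:ℝ) ≤ Tc)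
  linarith

lemma Ssys1_contOn (N : ℕ) {EP σ Ts Tc : ℝ} (hσ : 0 < σ) (hTc : σ ≤ Tc) (hTs : Tc ≤ Ts) :
    ContinuousOn (Ssys1 N EP σ Ts Tc) (Set.Ioo (0:ℝ) 1) := by
  have h1 : ContinuousOn (fun p:ℝ => 1 - p) (Set.Ioo (0:ℝ) 1) := by fun_prop
  have hne : ∀ p ∈ Set.Ioo (0:ℝ) 1, 1 - p ≠ 0 := by
    intro p hp; have h2 := hp.2; intro h; nlinarith
  have hq : ContinuousOn (fun p:ℝ => (N:ℝ) * p / (1 - p)) (Set.Ioo (0:ℝ) 1) :=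
    ContinuousOn.div (by fun_prop) h1 hne
  have hnum : ContinuousOn (fun p:ℝ => EP * ((N:ℝ) * p / (1 - p)) * (1 - p) ^ N)
      (Set.Ioo (0:ℝ) 1) := (continuousOn_const.mul hq).mul (h1.pow N)
  have hden : ContinuousOn (fun p:ℝ => (1 - p) ^ N * σ
      + ((N:ℝ) * p / (1 - p)) * (1 - p) ^ N * (Ts - Tc) + (1 - (1 - p) ^ N) * Tc)
      (Set.Ioo (0:ℝ) 1) :=
    (((h1.pow N).mul continuousOn_const).add
      ((hq.mul (h1.pow N)).mul continuousOn_const)).add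
      ((continuousOn_const.sub (h1.pow N)).mul continuousOn_const)
  exact ContinuousOn.div hnum hden (fun p hp => (Sden_pos N hσ hTc hTs hp).ne')

/-- With unit weights, assuming the fixed-point attempt probabilities `τ̂(q)` (given by the
function `Tq`) and `τ(j;p₀)` (given by `Trr`) lie in `(0,1)`, the supremum of the
throughput over all exponential-backoff reset distributions is attained within the
RandomReset family: there are `j ∈ {0,…,m-1}` and `p₀ ∈ [0,1]` such that
`S(τ(j;p₀), 1)` dominates `S(τ̂(q), 1)` for every reset distribution `q` and dominates
`S(τ(j';p₀'), 1)` for every RandomReset policy; hence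
`sup_q S(τ̂(q),1) = max_{j,p₀} S(τ(j;p₀),1)`. -/
theorem optimal_backoff_is_RandomReset (m CWmin N : ℕ) (hm : 1 ≤ m) (hCW : 2 ≤ CWmin)
    (hN : 2 ≤ N) (EP σ Ts Tc : ℝ)
    (hEP : 0 < EP) (hσ : 0 < σ) (hTc : σ ≤ Tc) (hTs : Tc ≤ Ts)
    (Tq : (Fin (m + 1) → ℝ) → ℝ) (Trr : ℕ → ℝ → ℝ)
    (hTq : ∀ q : Fin (m + 1) → ℝ, IsResetDist m q →
      Tq q ∈ Set.Ioo (0 : ℝ) 1 ∧ IsFixedPointQ m CWmin N q (Tq q))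
    (hTrr : ∀ j : ℕ, ∀ p0 ∈ Set.Icc (0 : ℝ) 1, j < m →
      Trr j p0 ∈ Set.Ioo (0 : ℝ) 1 ∧ IsFixedPointRR m CWmin N j p0 (Trr j p0)) :
    ∃ j : ℕ, ∃ p0 : ℝ, j < m ∧ p0 ∈ Set.Icc (0 : ℝ) 1 ∧
      (∀ q : Fin (m + 1) → ℝ, IsResetDist m q →
        Ssys1 N EP σ Ts Tc (Tq q) ≤ Ssys1 N EP σ Ts Tc (Trr j p0)) ∧
      (∀ j' : ℕ, ∀ p0' ∈ Set.Icc (0 : ℝ) 1, j' < m →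
        Ssys1 N EP σ Ts Tc (Trr j' p0') ≤ Ssys1 N EP σ Ts Tc (Trr j p0)) ∧
      sSup {x : ℝ | ∃ q : Fin (m + 1) → ℝ, IsResetDist m q ∧ x = Ssys1 N EP σ Ts Tc (Tq q)}
        = Ssys1 N EP σ Ts Tc (Trr j p0) := by
  classical
  have hκpos : 0 < kappa0 CWmin := by
    unfold kappa0
    have : (0:ℝ) < (CWmin:ℝ) := by
      have : (2:ℝ) ≤ (CWmin:ℝ) := by exact_mod_cast hCW
      linarith
    positivity
  have hκle : kappa0 CWmin ≤ 1 := by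
    unfold kappa0
    rw [div_le_one (by exact_mod_cast Nat.lt_of_lt_of_le (by norm_num) hCW)]
    exact_mod_cast hCW
  -- the feasibility region
  set T : Set ℝ := {τ | τ ∈ Set.Icc (0:ℝ) 1 ∧ kappa0 CWmin ≤ phiF m N m τ
      ∧ phiF m N 0 τ ≤ kappa0 CWmin} with hTdef
  have hTIoo : T ⊆ Set.Ioo (0:ℝ) 1 := by
    rintro τ ⟨hIcc, hup, hlo⟩
    constructor
    · rcases lt_or_eq_of_le hIcc.1 with h | h
      · exact h
      · exfalso
        have : phiF m N m τ = 0 := by rw [← h]; unfold phiF; rw [zero_mul]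
        rw [this] at hup; linarith
    · rcases lt_or_eq_of_le hIcc.2 with h | h
      · exact h
      · exfalso
        have hc1 : ccf N 1 = 1 := by
          unfold ccf
          rw [show (1:ℝ) - 1 = 0 by ring, zero_pow (by omega : N - 1 ≠ 0)]
          ring
        have : phiF m N 0 1 = 2 ^ m := by
          unfold phiF
          rw [hc1]
          unfold alphaB
          simp
        rw [h, this] at hlo
        have : (2:ℝ) ≤ 2 ^ m := by
          calc (2:ℝ) = 2 ^ 1 := by norm_num
            _ ≤ 2 ^ m := pow_le_pow_right₀ (by norm_num) hm
        linarith
  have hTclosed : IsClosed T := by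
    have : T = Set.Icc (0:ℝ) 1 ∩ ({τ | kappa0 CWmin ≤ phiF m N m τ}
        ∩ {τ | phiF m N 0 τ ≤ kappa0 CWmin}) := rfl
    rw [this]
    exact isClosed_Icc.inter ((isClosed_le continuous_const (phiF_cont m N m)).inter
      (isClosed_le (phiF_cont m N 0) continuous_const))
  have hTcompact : IsCompact T :=
    isCompact_Icc.of_isClosed_subset hTclosed (fun τ h => h.1)
  -- every fixed point lies in T
  have hmemT : ∀ w : Fin (m+1) → ℝ, IsResetDist m w → ∀ τ : ℝ, τ ∈ Set.Icc (0:ℝ) 1 →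
      τ = tauHatC m CWmin w (1 - (1 - τ) ^ (N - 1)) → τ ∈ T := by
    intro w hw τ hτ heq
    have hg := fixed_gW m N CWmin hN hw hτ heq
    have hb := phi_bounds m N hN hw hτ
    exact ⟨hτ, by rw [← hg]; exact hb.2, by rw [← hg]; exact hb.1⟩
  have hTq' : ∀ q : Fin (m+1) → ℝ, IsResetDist m q → Tq q ∈ T := by
    intro q hq
    obtain ⟨hIoo, hIcc, heq⟩ := hTq q hq
    exact hmemT q hq _ hIcc heq
  have hTrr' : ∀ j' : ℕ, ∀ p0' ∈ Set.Icc (0:ℝ) 1, j' < m → Trr j' p0' ∈ T := by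
    intro j' p0' hp0' hj'
    obtain ⟨hIoo, hIcc, heq⟩ := hTrr j' p0' hp0' hj'
    rw [tauRRC_eq_tauHatC m CWmin j' hj'] at heq
    exact hmemT _ (qRR_isDist m j' hj' hp0') _ hIcc heq
  have hTne : T.Nonempty := ⟨Trr 0 1, hTrr' 0 1 ⟨by norm_num, le_refl 1⟩ (by omega)⟩
  -- maximize the throughput over T
  obtain ⟨τs, hτsT, hmax⟩ := hTcompact.exists_isMaxOn hTne
    ((Ssys1_contOn N (EP := EP) hσ hTc hTs).mono hTIoo)
  obtain ⟨hτs0, hτs1⟩ := hTIoo hτsT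
  obtain ⟨hτsIcc, hκm, hκ0⟩ := hτsT
  -- build the RandomReset parameters realizing τs
  set c : ℝ := ccf N τs with hc
  have hcmem := ccf_mem N hN hτs0.le hτs1.le
  set D : ℝ := kappa0 CWmin / τs with hD
  have hα0 : alphaB m 0 c ≤ D := by
    rw [hD, le_div_iff₀ hτs0]
    have : phiF m N 0 τs = τs * alphaB m 0 c := rfl
    nlinarith [hκ0]
  have hαm : D ≤ alphaB m m c := by
    rw [hD, div_le_iff₀ hτs0]
    have : phiF m N m τs = τs * alphaB m m c := rfl
    nlinarith [hκm]
  set P : ℕ → Prop := fun j => alphaB m j c ≤ D with hP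
  set j0 : ℕ := Nat.findGreatest P (m-1) with hj0
  have hj0m : j0 < m := by
    have := Nat.findGreatest_le (P := P) (m-1)
    omega
  have hPj0 : alphaB m j0 c ≤ D :=
    Nat.findGreatest_spec (Nat.zero_le _) (by exact hα0 : P 0)
  have hmj : (0:ℝ) < (m:ℝ) - (j0:ℝ) := by
    have : (j0:ℝ) < (m:ℝ) := by exact_mod_cast hj0m
    linarith
  set Sig : ℝ := ∑ i ∈ Finset.Icc (j0+1) m, alphaB m i c with hSig
  set A : ℝ := Sig / ((m:ℝ) - (j0:ℝ)) with hA
  have hcard : ((Finset.Icc (j0+1) m).card : ℝ) = (m:ℝ) - (j0:ℝ) := by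
    rw [Nat.card_Icc]
    have : m + 1 - (j0+1) = m - j0 := by omega
    rw [this, Nat.cast_sub hj0m.le]
  have hDA : D ≤ A := by
    rcases Nat.lt_or_ge j0 (m-1) with hcase | hcase
    · -- j0 < m-1 : maximality gives D < α_{j0+1} ≤ A
      have hkk : Nat.findGreatest P (m-1) < j0 + 1 := by rw [← hj0]; exact lt_add_one j0
      have hng := Nat.findGreatest_is_greatest hkk (by omega : j0 + 1 ≤ m - 1)
      have hlt : D < alphaB m (j0+1) c := by
        by_contra hcon
        push_neg at hcon
        exact hng hcon
      have hsum : ((m:ℝ) - (j0:ℝ)) * alphaB m (j0+1) c ≤ Sig := by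
        rw [hSig, ← hcard]
        have := Finset.card_nsmul_le_sum (Finset.Icc (j0+1) m)
          (fun i => alphaB m i c) (alphaB m (j0+1) c)
          (fun i hi => alphaB_mono m c hcmem.1 hcmem.2 (j0+1) i
            (Finset.mem_Icc.mp hi).1 (Finset.mem_Icc.mp hi).2)
        rw [nsmul_eq_mul] at this
        exact this
      rw [hA, le_div_iff₀ hmj]
      nlinarith
    · -- j0 = m-1 : A = α_m
      have hj0e : j0 = m - 1 := le_antisymm (Nat.findGreatest_le (m-1)) hcase
      have hIccm : Finset.Icc (j0+1) m = {m} := by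
        have : j0 + 1 = m := by omega
        rw [this, Finset.Icc_self]
      have hSige : Sig = alphaB m m c := by rw [hSig, hIccm, Finset.sum_singleton]
      have hm1 : (m:ℝ) - (j0:ℝ) = 1 := by
        have : ((j0:ℕ):ℝ) = (m:ℝ) - 1 := by
          rw [hj0e, Nat.cast_sub hm]; norm_num
        rw [this]; ring
      rw [hA, hm1, hSige, div_one]
      exact hαm
  set p0 : ℝ := (A - D) / (A - alphaB m j0 c) with hp0def
  have hαA : alphaB m j0 c ≤ A := le_trans hPj0 hDA
  have hp0mem : p0 ∈ Set.Icc (0:ℝ) 1 := by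
    rcases eq_or_lt_of_le hαA with he | hlt
    · rw [hp0def, ← he, sub_self, div_zero]
      exact ⟨le_refl 0, by norm_num⟩
    · constructor
      · exact div_nonneg (by linarith) (by linarith)
      · rw [hp0def, div_le_one (by linarith)]
        linarith
  have hDR : p0 * alphaB m j0 c + (1 - p0) * A = D := by
    rcases eq_or_lt_of_le hαA with he | hlt
    · have hDe : D = A := le_antisymm hDA (by rw [← he] at hDA ⊢; exact hPj0)
      -- α = A and α ≤ D ≤ A forces D = α = A
      rw [← he, hDe, ← he]; ring
    · have hne : A - alphaB m j0 c ≠ 0 := by linarith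
      have key : p0 * (A - alphaB m j0 c) = A - D := by
        rw [hp0def]; exact div_mul_cancel₀ _ hne
      linear_combination (-1 : ℝ) * key
  have hDModRR : p0 * alphaB m j0 c + ((1 - p0) / ((m:ℝ) - (j0:ℝ))) * Sig = D := by
    rw [← hDR, hA]
    field_simp
  have hfixRR : τs = tauRRC m CWmin j0 p0 (1 - (1 - τs) ^ (N - 1)) := by
    have hcc : (1:ℝ) - (1 - τs) ^ (N - 1) = c := rfl
    rw [hcc, tauRRC, ← hSig, hDModRR, hD]
    rw [div_div_eq_mul_div, mul_div_cancel_left₀ τs hκpos.ne']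
  -- uniqueness of fixed points for the distribution qRR j0 p0
  have hq0dist := qRR_isDist m j0 hj0m hp0mem
  have huniq : ∀ τ1 τ2 : ℝ, τ1 ∈ Set.Icc (0:ℝ) 1 → τ2 ∈ Set.Icc (0:ℝ) 1 →
      τ1 = tauHatC m CWmin (qRR m j0 p0) (1 - (1 - τ1) ^ (N - 1)) →
      τ2 = tauHatC m CWmin (qRR m j0 p0) (1 - (1 - τ2) ^ (N - 1)) → τ1 = τ2 := by
    intro τ1 τ2 h1m h2m h1e h2e
    have g1 := fixed_gW m N CWmin hN hq0dist h1m h1e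
    have g2 := fixed_gW m N CWmin hN hq0dist h2m h2e
    exact (gW_strictMono m N hN hq0dist).injOn h1m h2m (g1.trans g2.symm)
  have hfixRRhat : τs = tauHatC m CWmin (qRR m j0 p0) (1 - (1 - τs) ^ (N - 1)) := by
    rw [← tauRRC_eq_tauHatC m CWmin j0 hj0m]; exact hfixRR
  obtain ⟨hrIoo, hrIcc, hreq⟩ := hTrr j0 p0 hp0mem hj0m
  rw [tauRRC_eq_tauHatC m CWmin j0 hj0m] at hreq
  have hTrrEq : Trr j0 p0 = τs := huniq _ _ hrIcc hτsIcc hreq hfixRRhat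
  obtain ⟨hqIoo, hqIcc, hqeq⟩ := hTq (qRR m j0 p0) hq0dist
  have hTqEq : Tq (qRR m j0 p0) = τs := huniq _ _ hqIcc hτsIcc hqeq hfixRRhat
  refine ⟨j0, p0, hj0m, hp0mem, ?_, ?_, ?_⟩
  · intro q hq
    rw [hTrrEq]
    exact hmax (hTq' q hq)
  · intro j' p0' hp0' hj'
    rw [hTrrEq]
    exact hmax (hTrr' j' p0' hp0' hj')
  · apply IsGreatest.csSup_eq
    constructor
    · exact ⟨qRR m j0 p0, hq0dist, by rw [hTqEq, hTrrEq]⟩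
    · rintro x ⟨q, hq, rfl⟩
      rw [hTrrEq]
      exact hmax (hTq' q hq)
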